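/- For any fixed φ ∈ ℝ, the identity F'(P⃗) = e^{iφ} F(P⃗) holds for all P⃗ ∈ 𝒫^m if and only if W(P⃗)^† W'(P⃗) = e^{iφ} C_{m:0} (C'_{m:0})^† holds for all P⃗ ∈ 𝒫^m. -/

import Mathlib

open Matrix Complex

noncomputable section

namespace QEC

/-- The space of `n`-qubit operators: `2^n × 2^n` complex matrices, with the
index set realized as `Fin n → Fin 2`. -/
abbrev QMat (n : ℕ) := Matrix (Fin n → Fin 2) (Fin n → Fin 2) ℂ

/-- The Pauli `X` matrix. -/
def PX : Matrix (Fin 2) (Fin 2) ℂ := !![0, 1; 1, 0]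

/-- The Pauli `Y` matrix. -/
def PY : Matrix (Fin 2) (Fin 2) ℂ := !![0, -Complex.I; Complex.I, 0]

/-- The Pauli `Z` matrix. -/
def PZ : Matrix (Fin 2) (Fin 2) ℂ := !![1, 0; 0, -1]

/-- The four single-qubit Pauli matrices `𝒫 = {I, X, Y, Z}`, indexed by `Fin 4`. -/
def pauli : Fin 4 → Matrix (Fin 2) (Fin 2) ℂ := ![1, PX, PY, PZ]

/-- `A^{(k)} = I^{⊗(k-1)} ⊗ A ⊗ I^{⊗(n-k)}`: the single-qubit operator `A`
acting on the `k`-th qubit of an `n`-qubit system. -/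
def embed {n : ℕ} (k : Fin n) (A : Matrix (Fin 2) (Fin 2) ℂ) : QMat n :=
  fun x y => A (x k) (y k) * ∏ q ∈ Finset.univ.erase k, (if x q = y q then (1 : ℂ) else 0)

/-- The Kronecker product `P 0 ⊗ P 1 ⊗ ⋯ ⊗ P (n-1)` of `n` single-qubit operators. -/
def kron {n : ℕ} (P : Fin n → Matrix (Fin 2) (Fin 2) ℂ) : QMat n :=
  fun x y => ∏ q, P q (x q) (y q)

/-- The circuit `F(A⃗) = C_m A_m^{(k_m)} C_{m-1} ⋯ C_1 A_1^{(k_1)} C_0`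
(here the layers are indexed by `Fin m`, with `i : Fin m` standing for layer `i+1`). -/
def circuit {n m : ℕ} (C : Fin (m + 1) → QMat n) (k : Fin m → Fin n)
    (A : Fin m → Matrix (Fin 2) (Fin 2) ℂ) : QMat n :=
  ((List.ofFn fun i : Fin m => C i.succ * embed (k i) (A i)).reverse).prod * C 0

/-- The cumulative product `C_{m:i} = C_m C_{m-1} ⋯ C_i`. -/
def Ccum {n m : ℕ} (C : Fin (m + 1) → QMat n) (i : Fin (m + 1)) : QMat n :=
  (((List.ofFn C).reverse).take (m + 1 - (i : ℕ))).prod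

/-- `V_i(P) = C_{m:i} P^{(k_i)} C_{m:i}^†` (with `i : Fin m` standing for layer `i+1`). -/
def Vop {n m : ℕ} (C : Fin (m + 1) → QMat n) (k : Fin m → Fin n) (i : Fin m)
    (P : Matrix (Fin 2) (Fin 2) ℂ) : QMat n :=
  Ccum C i.succ * embed (k i) P * (Ccum C i.succ)ᴴ

/-- `W(P⃗) = V_m(P_m) V_{m-1}(P_{m-1}) ⋯ V_1(P_1)`. -/
def Wop {n m : ℕ} (C : Fin (m + 1) → QMat n) (k : Fin m → Fin n)
    (P : Fin m → Matrix (Fin 2) (Fin 2) ℂ) : QMat n :=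
  ((List.ofFn fun i : Fin m => Vop C k i (P i)).reverse).prod

/-- The global phase `e^{iφ}`. -/
def phase (φ : ℝ) : ℂ := Complex.exp ((φ : ℂ) * Complex.I)

/-- A unitary `C` is Clifford when it maps every Pauli string to a signed Pauli
string under conjugation. -/
def IsClifford {n : ℕ} (C : QMat n) : Prop :=
  ∀ Q : Fin n → Fin 4, ∃ (ε : ℂ) (Q' : Fin n → Fin 4), (ε = 1 ∨ ε = -1) ∧
    C * kron (fun q => pauli (Q q)) * Cᴴ = ε • kron (fun q => pauli (Q' q))

lemma kron_one {n : ℕ} : kron (fun _ : Fin n => (1 : Matrix (Fin 2) (Fin 2) ℂ)) = 1 := by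
  ext x y
  simp only [kron, Matrix.one_apply]
  by_cases h : x = y
  · simp [h]
  · obtain ⟨q, hq⟩ : ∃ q, x q ≠ y q := by
      by_contra hc
      push_neg at hc
      exact h (funext hc)
    rw [if_neg h]
    exact Finset.prod_eq_zero (Finset.mem_univ q) (by simp [hq])

lemma kron_mul {n : ℕ} (P Q : Fin n → Matrix (Fin 2) (Fin 2) ℂ) :
    kron P * kron Q = kron fun q => P q * Q q := by
  ext x y
  simp only [kron, Matrix.mul_apply, ← Finset.prod_mul_distrib]
  exact (Fintype.prod_sum fun q j => P q (x q) j * Q q j (y q)).symm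

lemma kron_conjTranspose {n : ℕ} (P : Fin n → Matrix (Fin 2) (Fin 2) ℂ) :
    (kron P)ᴴ = kron fun q => (P q)ᴴ := by
  ext x y
  simp [kron, Matrix.conjTranspose_apply, map_prod]

lemma embed_eq_kron {n : ℕ} (k : Fin n) (A : Matrix (Fin 2) (Fin 2) ℂ) :
    embed k A = kron (Function.update (fun _ => 1) k A) := by
  ext x y
  rw [kron, embed, ← Finset.prod_erase_mul _ _ (Finset.mem_univ k)]
  rw [Function.update_self, mul_comm]
  congr 1
  apply Finset.prod_congr rfl
  intro q hq
  rw [Function.update_of_ne (Finset.ne_of_mem_erase hq), Matrix.one_apply]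

lemma embed_mul {n : ℕ} (k : Fin n) (A B : Matrix (Fin 2) (Fin 2) ℂ) :
    embed k A * embed k B = embed k (A * B) := by
  rw [embed_eq_kron, embed_eq_kron, embed_eq_kron, kron_mul]
  refine congrArg kron (funext fun q => ?_)
  by_cases h : q = k
  · subst h; simp
  · simp [Function.update_of_ne h]

lemma embed_one {n : ℕ} (k : Fin n) : embed k (1 : Matrix (Fin 2) (Fin 2) ℂ) = 1 := by
  rw [embed_eq_kron, ← kron_one]
  refine congrArg kron (funext fun q => ?_)
  by_cases h : q = k
  · subst h; simp
  · simp [Function.update_of_ne h]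

lemma embed_conjTranspose {n : ℕ} (k : Fin n) (A : Matrix (Fin 2) (Fin 2) ℂ) :
    (embed k A)ᴴ = embed k Aᴴ := by
  rw [embed_eq_kron, embed_eq_kron, kron_conjTranspose]
  refine congrArg kron (funext fun q => ?_)
  by_cases h : q = k
  · subst h; simp
  · simp [Function.update_of_ne h]

lemma embed_mem_unitary {n : ℕ} (k : Fin n) (A : Matrix (Fin 2) (Fin 2) ℂ)
    (hA : A ∈ Matrix.unitaryGroup (Fin 2) ℂ) :
    embed k A ∈ Matrix.unitaryGroup (Fin n → Fin 2) ℂ := by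
  constructor
  · show (embed k A)ᴴ * embed k A = 1
    rw [embed_conjTranspose, embed_mul]
    rw [show Aᴴ * A = 1 from hA.1, embed_one]
  · show embed k A * (embed k A)ᴴ = 1
    rw [embed_conjTranspose, embed_mul]
    rw [show A * Aᴴ = 1 from hA.2, embed_one]

lemma pauli_mem_unitary (j : Fin 4) : pauli j ∈ Matrix.unitaryGroup (Fin 2) ℂ := by
  constructor <;>
  · fin_cases j <;>
    · show _ * _ = _
      ext a b
      fin_cases a <;> fin_cases b <;>
        simp [pauli, PX, PY, PZ, Matrix.mul_apply, Fin.sum_univ_two, Matrix.one_apply,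
          Complex.ext_iff]

lemma Ccum_mem_unitary {n m : ℕ} (C : Fin (m + 1) → QMat n)
    (hC : ∀ i, C i ∈ Matrix.unitaryGroup (Fin n → Fin 2) ℂ) (i : Fin (m + 1)) :
    Ccum C i ∈ Matrix.unitaryGroup (Fin n → Fin 2) ℂ := by
  apply Submonoid.list_prod_mem
  intro x hx
  have hx' : x ∈ List.ofFn C := List.mem_reverse.mp (List.mem_of_mem_take hx)
  obtain ⟨j, rfl⟩ := List.mem_ofFn.mp hx'
  exact hC j

lemma Vop_mem_unitary {n m : ℕ} (C : Fin (m + 1) → QMat n)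
    (hC : ∀ i, C i ∈ Matrix.unitaryGroup (Fin n → Fin 2) ℂ) (k : Fin m → Fin n) (i : Fin m)
    (P : Matrix (Fin 2) (Fin 2) ℂ) (hP : P ∈ Matrix.unitaryGroup (Fin 2) ℂ) :
    Vop C k i P ∈ Matrix.unitaryGroup (Fin n → Fin 2) ℂ := by
  have h1 := Ccum_mem_unitary C hC i.succ
  have h2 : (Ccum C i.succ)ᴴ ∈ Matrix.unitaryGroup (Fin n → Fin 2) ℂ := by
    rw [← Matrix.star_eq_conjTranspose]
    exact Unitary.star_mem h1
  exact mul_mem (mul_mem h1 (embed_mem_unitary _ _ hP)) h2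

lemma Wop_mem_unitary {n m : ℕ} (C : Fin (m + 1) → QMat n)
    (hC : ∀ i, C i ∈ Matrix.unitaryGroup (Fin n → Fin 2) ℂ) (k : Fin m → Fin n)
    (P : Fin m → Matrix (Fin 2) (Fin 2) ℂ) (hP : ∀ i, P i ∈ Matrix.unitaryGroup (Fin 2) ℂ) :
    Wop C k P ∈ Matrix.unitaryGroup (Fin n → Fin 2) ℂ := by
  apply Submonoid.list_prod_mem
  intro x hx
  obtain ⟨j, rfl⟩ := List.mem_ofFn.mp (List.mem_reverse.mp hx)
  exact Vop_mem_unitary C hC k j _ (hP j)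

lemma conj_list_prod {n : ℕ} (D : QMat n) (hD : Dᴴ * D = 1) (hD' : D * Dᴴ = 1)
    (L : List (QMat n)) :
    (L.map fun M => D * M * Dᴴ).prod = D * L.prod * Dᴴ := by
  induction L with
  | nil => simp [hD']
  | cons a t ih =>
      simp only [List.map_cons, List.prod_cons, ih]
      calc D * a * Dᴴ * (D * t.prod * Dᴴ) = D * a * (Dᴴ * D) * t.prod * Dᴴ := by
            noncomm_ring
        _ = D * (a * t.prod) * Dᴴ := by rw [hD]; noncomm_ring

lemma Ccum_castSucc {n m : ℕ} (C : Fin (m + 2) → QMat n) (i : Fin (m + 1)) :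
    Ccum C i.castSucc = C (Fin.last (m + 1)) * Ccum (C ∘ Fin.castSucc) i := by
  rw [Ccum, Ccum, List.ofFn_succ' C, List.concat_eq_append, List.reverse_append]
  have h1 : (i.castSucc : ℕ) = (i : ℕ) := rfl
  have h2 : m + 2 - (i : ℕ) = (m + 1 - (i : ℕ)) + 1 := by omega
  rw [h1, h2]
  simp [List.take_cons, Function.comp]

lemma key {n : ℕ} : ∀ (m : ℕ) (C : Fin (m + 1) → QMat n) (k : Fin m → Fin n)
    (A : Fin m → Matrix (Fin 2) (Fin 2) ℂ),
    (∀ i, C i ∈ Matrix.unitaryGroup (Fin n → Fin 2) ℂ) →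
    Wop C k A * Ccum C 0 = circuit C k A := by
  intro m
  induction m with
  | zero =>
      intro C k A _
      simp [Wop, Ccum, circuit, List.ofFn_zero]
  | succ m ih =>
      intro C k A hC
      set D := C (Fin.last (m + 1)) with hDdef
      have hDu : Dᴴ * D = 1 := by
        have := (hC (Fin.last (m + 1))).1
        rwa [Matrix.star_eq_conjTranspose] at this
      have hDu' : D * Dᴴ = 1 := by
        have := (hC (Fin.last (m + 1))).2
        rwa [Matrix.star_eq_conjTranspose] at this
      set C0 : Fin (m + 1) → QMat n := C ∘ Fin.castSucc with hC0
      have hC0u : ∀ i, C0 i ∈ Matrix.unitaryGroup (Fin n → Fin 2) ℂ := fun i => hC _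
      -- top Ccum is D
      have htop : Ccum C (Fin.last (m + 1)) = D := by
        rw [Ccum]
        have : m + 1 + 1 - ((Fin.last (m + 1) : Fin (m + 2)) : ℕ) = 1 := by
          simp [Fin.last]
        rw [this, List.ofFn_succ' C, List.concat_eq_append, List.reverse_append]
        simp [hDdef]
      -- decompose Wop
      have hterm : ∀ j : Fin m, Vop C k j.castSucc (A j.castSucc) =
          D * Vop C0 (k ∘ Fin.castSucc) j ((A ∘ Fin.castSucc) j) * Dᴴ := by
        intro j
        rw [Vop, Vop, Fin.succ_castSucc, Ccum_castSucc]
        simp only [Matrix.conjTranspose_mul, Function.comp_apply, hC0]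
        noncomm_ring
      have hW : Wop C k A =
          Vop C k (Fin.last m) (A (Fin.last m)) * (D * Wop C0 (k ∘ Fin.castSucc)
            (A ∘ Fin.castSucc) * Dᴴ) := by
        rw [Wop, List.ofFn_succ' (fun i : Fin (m + 1) => Vop C k i (A i)),
          List.concat_eq_append, List.reverse_append]
        simp only [List.reverse_singleton, List.singleton_append, List.prod_cons]
        congr 1
        have hlist : (List.ofFn fun i : Fin m => Vop C k i.castSucc (A i.castSucc))
            = (List.ofFn fun i : Fin m =>
                Vop C0 (k ∘ Fin.castSucc) i ((A ∘ Fin.castSucc) i)).map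
              fun M => D * M * Dᴴ := by
          rw [List.map_ofFn]
          exact congrArg List.ofFn (funext hterm)
        rw [hlist, ← List.map_reverse, conj_list_prod D hDu hDu', Wop]
      -- decompose Ccum 0
      have hCc : Ccum C 0 = D * Ccum C0 0 := by
        have h0 : (0 : Fin (m + 2)) = (0 : Fin (m + 1)).castSucc := by simp
        rw [h0, Ccum_castSucc]
      -- decompose circuit
      have hcirc : circuit C k A =
          D * embed (k (Fin.last m)) (A (Fin.last m)) *
            circuit C0 (k ∘ Fin.castSucc) (A ∘ Fin.castSucc) := by
        rw [circuit, circuit,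
          List.ofFn_succ' (fun i : Fin (m + 1) => C i.succ * embed (k i) (A i)),
          List.concat_eq_append, List.reverse_append]
        simp only [List.reverse_singleton, List.singleton_append, List.prod_cons, Fin.succ_last]
        have : (List.ofFn fun i : Fin m => C i.castSucc.succ * embed (k i.castSucc) (A i.castSucc))
            = List.ofFn fun i : Fin m => C0 i.succ * embed ((k ∘ Fin.castSucc) i)
                ((A ∘ Fin.castSucc) i) := by
          refine congrArg List.ofFn (funext fun i => ?_)
          rw [Fin.succ_castSucc]
          rfl
        have h00 : C 0 = C0 0 := rfl
        rw [this, h00, ← hDdef, mul_assoc]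
      -- put together
      have hVtop : Vop C k (Fin.last m) (A (Fin.last m)) =
          D * embed (k (Fin.last m)) (A (Fin.last m)) * Dᴴ := by
        rw [Vop, Fin.succ_last, htop]
      rw [hW, hCc, hcirc, hVtop, ← ih C0 (k ∘ Fin.castSucc) (A ∘ Fin.castSucc) hC0u]
      calc D * embed (k (Fin.last m)) (A (Fin.last m)) * Dᴴ *
            (D * Wop C0 (k ∘ Fin.castSucc) (A ∘ Fin.castSucc) * Dᴴ) * (D * Ccum C0 0)
          = D * embed (k (Fin.last m)) (A (Fin.last m)) * (Dᴴ * D) *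
              Wop C0 (k ∘ Fin.castSucc) (A ∘ Fin.castSucc) * (Dᴴ * D) * Ccum C0 0 := by
            noncomm_ring
        _ = D * embed (k (Fin.last m)) (A (Fin.last m)) *
              (Wop C0 (k ∘ Fin.castSucc) (A ∘ Fin.castSucc) * Ccum C0 0) := by
            rw [hDu]; noncomm_ring

/-- For a fixed phase `φ`, `F'(P⃗) = e^{iφ} F(P⃗)` for all `P⃗ ∈ 𝒫^m` iff
`W(P⃗)^† W'(P⃗) = e^{iφ} C_{m:0} (C'_{m:0})^†` for all `P⃗ ∈ 𝒫^m`. -/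
theorem stmt4 (n m : ℕ) (hn : 1 ≤ n) (hm : 1 ≤ m)
    (C C' : Fin (m + 1) → QMat n)
    (hC : ∀ i, C i ∈ Matrix.unitaryGroup (Fin n → Fin 2) ℂ)
    (hC' : ∀ i, C' i ∈ Matrix.unitaryGroup (Fin n → Fin 2) ℂ)
    (k l : Fin m → Fin n) (φ : ℝ) :
    (∀ p : Fin m → Fin 4,
        circuit C' l (fun i => pauli (p i)) = phase φ • circuit C k (fun i => pauli (p i))) ↔
    (∀ p : Fin m → Fin 4,
        (Wop C k (fun i => pauli (p i)))ᴴ * Wop C' l (fun i => pauli (p i)) =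
          phase φ • (Ccum C 0 * (Ccum C' 0)ᴴ)) := by
  have hG := Ccum_mem_unitary C hC 0
  have hG' := Ccum_mem_unitary C' hC' 0
  constructor
  · intro h p
    set W := Wop C k (fun i => pauli (p i)) with hWdef
    set W' := Wop C' l (fun i => pauli (p i)) with hW'def
    have hWu : W ∈ Matrix.unitaryGroup (Fin n → Fin 2) ℂ :=
      Wop_mem_unitary C hC k _ (fun i => pauli_mem_unitary (p i))
    have h1 : Wᴴ * W = 1 := by
      have := hWu.1; rwa [Matrix.star_eq_conjTranspose] at this
    have h2 : Ccum C' 0 * (Ccum C' 0)ᴴ = 1 := by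
      have := hG'.2; rwa [Matrix.star_eq_conjTranspose] at this
    have hk : W * Ccum C 0 = circuit C k (fun i => pauli (p i)) :=
      key m C k _ hC
    have hk' : W' * Ccum C' 0 = circuit C' l (fun i => pauli (p i)) :=
      key m C' l _ hC'
    have heq : W' * Ccum C' 0 = phase φ • (W * Ccum C 0) := by
      rw [hk, hk']; exact h p
    calc Wᴴ * W' = Wᴴ * (W' * (Ccum C' 0 * (Ccum C' 0)ᴴ)) := by rw [h2, mul_one]
      _ = Wᴴ * (W' * Ccum C' 0) * (Ccum C' 0)ᴴ := by noncomm_ring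
      _ = Wᴴ * (phase φ • (W * Ccum C 0)) * (Ccum C' 0)ᴴ := by rw [heq]
      _ = phase φ • ((Wᴴ * W) * (Ccum C 0 * (Ccum C' 0)ᴴ)) := by
          rw [mul_smul_comm, smul_mul_assoc]
          congr 1
          noncomm_ring
      _ = phase φ • (Ccum C 0 * (Ccum C' 0)ᴴ) := by rw [h1, one_mul]
  · intro h p
    set W := Wop C k (fun i => pauli (p i)) with hWdef
    set W' := Wop C' l (fun i => pauli (p i)) with hW'def
    have hWu : W ∈ Matrix.unitaryGroup (Fin n → Fin 2) ℂ :=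
      Wop_mem_unitary C hC k _ (fun i => pauli_mem_unitary (p i))
    have h1 : W * Wᴴ = 1 := by
      have := hWu.2; rwa [Matrix.star_eq_conjTranspose] at this
    have h2 : (Ccum C' 0)ᴴ * Ccum C' 0 = 1 := by
      have := hG'.1; rwa [Matrix.star_eq_conjTranspose] at this
    have hk : W * Ccum C 0 = circuit C k (fun i => pauli (p i)) :=
      key m C k _ hC
    have hk' : W' * Ccum C' 0 = circuit C' l (fun i => pauli (p i)) :=
      key m C' l _ hC'
    rw [← hk, ← hk']
    calc W' * Ccum C' 0 = (W * Wᴴ) * W' * Ccum C' 0 := by rw [h1, one_mul]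
      _ = W * ((Wᴴ * W') * Ccum C' 0) := by noncomm_ring
      _ = W * ((phase φ • (Ccum C 0 * (Ccum C' 0)ᴴ)) * Ccum C' 0) := by rw [h p]
      _ = phase φ • (W * (Ccum C 0 * (Ccum C' 0)ᴴ * Ccum C' 0)) := by
          rw [smul_mul_assoc, mul_smul_comm]
      _ = phase φ • (W * (Ccum C 0 * ((Ccum C' 0)ᴴ * Ccum C' 0))) := by
          rw [mul_assoc (Ccum C 0)]
      _ = phase φ • (W * Ccum C 0) := by rw [h2, mul_one]


end QEC
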